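/- A three-level PT-net system (N,M0) with T = L ∪ D ∪ H has the property BINI if and only if Q(h,l) holds for every high-level transition h ∈ H and every low-level transition l ∈ L. -/

import Mathlib

/-! ## Labelled transition systems -/

structure LTS (Q : Type _) (A : Type _) where
  init : Q
  tr : Q → A → Q → Prop

namespace LTS

variable {Q Q' A : Type _}

/-- One unobservable step. -/
def TauStep (S : LTS Q A) (Obs : Set A) (q q' : Q) : Prop :=
  ∃ τ, τ ∉ Obs ∧ S.tr q τ q'

/-- `q →* q'` : reflexive-transitive closure of unobservable steps. -/
def TauStar (S : LTS Q A) (Obs : Set A) : Q → Q → Prop :=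
  Relation.ReflTransGen (S.TauStep Obs)

/-- Weak steps producing a word of observable labels. -/
inductive WeakSteps (S : LTS Q A) (Obs : Set A) : Q → List A → Q → Prop
  | nil (q : Q) : WeakSteps S Obs q [] q
  | tau {q q' q'' : Q} {w : List A} {τ : A} :
      τ ∉ Obs → S.tr q τ q' → WeakSteps S Obs q' w q'' → WeakSteps S Obs q w q''
  | obs {q q' q'' : Q} {w : List A} {σ : A} :
      σ ∈ Obs → S.tr q σ q' → WeakSteps S Obs q' w q'' → WeakSteps S Obs q (σ :: w) q''

/-- The language of a partially observed LTS. -/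
def lang (S : LTS Q A) (Obs : Set A) : Set (List A) :=
  { w | ∃ q, S.WeakSteps Obs S.init w q }

end LTS

/-- `R` is a weak simulation of `S` by `S'`. -/
def IsWeakSimulation {Q Q' A : Type _} (Obs : Set A) (S : LTS Q A) (S' : LTS Q' A)
    (R : Q → Q' → Prop) : Prop :=
  R S.init S'.init ∧
  ∀ q1 q1', R q1 q1' →
    (∀ σ ∈ Obs, ∀ q2, S.tr q1 σ q2 →
      ∃ q1'' q2'' q2', S'.TauStar Obs q1' q1'' ∧ S'.tr q1'' σ q2'' ∧
        S'.TauStar Obs q2'' q2' ∧ R q2 q2') ∧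
    (∀ τ ∉ Obs, ∀ q2, S.tr q1 τ q2 →
      ∃ q2', S'.TauStar Obs q1' q2' ∧ R q2 q2')

/-- `S` is weakly simulated by `S'`. -/
def WeaklySimulated {Q Q' A : Type _} (Obs : Set A) (S : LTS Q A) (S' : LTS Q' A) : Prop :=
  ∃ R, IsWeakSimulation Obs S S' R

/-- `R` is a weak bisimulation between `S` and `S'`. -/
def IsWeakBisimulation {Q Q' A : Type _} (Obs : Set A) (S : LTS Q A) (S' : LTS Q' A)
    (R : Q → Q' → Prop) : Prop :=
  IsWeakSimulation Obs S S' R ∧ IsWeakSimulation Obs S' S (fun q' q => R q q')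

/-- `S` and `S'` are weakly bisimilar. -/
def WeaklyBisimilar {Q Q' A : Type _} (Obs : Set A) (S : LTS Q A) (S' : LTS Q' A) : Prop :=
  ∃ R, IsWeakBisimulation Obs S S' R

/-! ## Place/Transition Petri nets -/

/-- A PT-net over a universe `P` of places and `Tr` of transitions:
a finite set of places, a finite set of transitions, and input/output flows.
Flows of non-transitions vanish. -/
structure PTNet (P : Type _) (Tr : Type _) where
  places : Finset P
  transitions : Finset Tr
  pre : Tr → P → ℕ
  post : Tr → P → ℕ
  pre_eq_zero : ∀ t ∉ transitions, ∀ p, pre t p = 0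
  post_eq_zero : ∀ t ∉ transitions, ∀ p, post t p = 0

namespace PTNet

variable {P Tr : Type _} [DecidableEq P] [DecidableEq Tr]

/-- `M[t⟩` : transition `t` is enabled at marking `M`. -/
def Enabled (N : PTNet P Tr) (M : P → ℕ) (t : Tr) : Prop :=
  t ∈ N.transitions ∧ ∀ p ∈ N.places, N.pre t p ≤ M p

/-- The marking obtained by firing `t` at `M`. -/
def fire (N : PTNet P Tr) (M : P → ℕ) (t : Tr) : P → ℕ :=
  fun p => if p ∈ N.places then M p + N.post t p - N.pre t p else M p

/-- `M[t⟩M'`. -/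
def Fires (N : PTNet P Tr) (M : P → ℕ) (t : Tr) (M' : P → ℕ) : Prop :=
  N.Enabled M t ∧ M' = N.fire M t

/-- `M[s⟩M'` for a sequence `s` of transitions. -/
def FiresSeq (N : PTNet P Tr) : (P → ℕ) → List Tr → (P → ℕ) → Prop
  | M, [], M' => M' = M
  | M, t :: s, M' => ∃ M'', N.Fires M t M'' ∧ N.FiresSeq M'' s M'

/-- `M'` is reachable from `M`. -/
def Reachable (N : PTNet P Tr) (M M' : P → ℕ) : Prop :=
  ∃ s, N.FiresSeq M s M'

/-- The restriction `N \ T'` of a net: the transitions in `T'` are removed. -/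
def restrict (N : PTNet P Tr) (T' : Finset Tr) : PTNet P Tr where
  places := N.places
  transitions := N.transitions \ T'
  pre := fun t p => if t ∈ N.transitions \ T' then N.pre t p else 0
  post := fun t p => if t ∈ N.transitions \ T' then N.post t p else 0
  pre_eq_zero := by intro t ht p; simp [ht]
  post_eq_zero := by intro t ht p; simp [ht]

/-- The composition `N1 | N2` of two nets (intended for disjoint place sets);
shared transitions synchronize. -/
def comp (N1 N2 : PTNet P Tr) : PTNet P Tr where
  places := N1.places ∪ N2.places
  transitions := N1.transitions ∪ N2.transitions
  pre := fun t p => if p ∈ N1.places then N1.pre t p else N2.pre t p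
  post := fun t p => if p ∈ N1.places then N1.post t p else N2.post t p
  pre_eq_zero := by
    intro t ht p
    simp only [Finset.mem_union, not_or] at ht
    by_cases hp : p ∈ N1.places <;>
      simp [hp, N1.pre_eq_zero t ht.1, N2.pre_eq_zero t ht.2]
  post_eq_zero := by
    intro t ht p
    simp only [Finset.mem_union, not_or] at ht
    by_cases hp : p ∈ N1.places <;>
      simp [hp, N1.post_eq_zero t ht.1, N2.post_eq_zero t ht.2]

/-- The union of two initial markings (agrees with `M1` on the places of `N1`,
with `M2` elsewhere). -/
def combine (N1 : PTNet P Tr) (M1 M2 : P → ℕ) : P → ℕ :=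
  fun p => if p ∈ N1.places then M1 p else M2 p

/-- The reachability graph of a marked net, as an LTS on markings. -/
def toLTS (N : PTNet P Tr) (M0 : P → ℕ) : LTS (P → ℕ) Tr where
  init := M0
  tr := fun M t M' => N.Fires M t M'

/-- The language of the net system `(N, M0)` whose observable transitions are
those in `L` (labelled by themselves): projections of firing sequences onto `L*`. -/
def lang (N : PTNet P Tr) (M0 : P → ℕ) (L : Finset Tr) : Set (List Tr) :=
  { w | ∃ s M, N.FiresSeq M0 s M ∧ s.filter (· ∈ L) = w }

/-- The free language of the net system `(N, M0)`: all of its firing sequences. -/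
def freeLang (N : PTNet P Tr) (M0 : P → ℕ) : Set (List Tr) :=
  { s | ∃ M, N.FiresSeq M0 s M }

/-- The net with given places and transitions and empty flow. -/
def ofSets (Pl : Finset P) (Ts : Finset Tr) : PTNet P Tr where
  places := Pl
  transitions := Ts
  pre := fun _ _ => 0
  post := fun _ _ => 0
  pre_eq_zero := fun _ _ _ => rfl
  post_eq_zero := fun _ _ _ => rfl

end PTNet

/-! ## Non-interference properties -/

section Security

variable {P Tr : Type _} [DecidableEq P] [DecidableEq Tr]

/-- Non-Deducibility on Compositions: for every high-level net system `N'`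
(with any initial marking `M0'`) whose places are disjoint from those of `N` and
whose transitions avoid `L`, the systems `N \ H` and `(N | N') \ (H \ H')` are
language equivalent, the observable transitions being those in `L`. -/
def NDC (N : PTNet P Tr) (M0 : P → ℕ) (L H : Finset Tr) : Prop :=
  ∀ (N' : PTNet P Tr) (M0' : P → ℕ),
    Disjoint N.places N'.places → Disjoint N'.transitions L →
    (N.restrict H).lang M0 L =
      ((N.comp N').restrict (H \ N'.transitions)).lang (N.combine M0 M0') L

/-- Bisimulation-based Non-Deducibility on Compositions: as `NDC`, but with
weak bisimilarity in place of language equivalence. -/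
def BNDC (N : PTNet P Tr) (M0 : P → ℕ) (L H : Finset Tr) : Prop :=
  ∀ (N' : PTNet P Tr) (M0' : P → ℕ),
    Disjoint N.places N'.places → Disjoint N'.transitions L →
    WeaklyBisimilar (L : Set Tr) ((N.restrict H).toLTS M0)
      (((N.comp N').restrict (H \ N'.transitions)).toLTS (N.combine M0 M0'))

/-- Strong BNDC: whenever a reachable marking `M1` enables a high transition `h`
with `M1[h⟩M2`, the systems `(N \ H, M1)` and `(N \ H, M2)` are weakly bisimilar. -/
def SBNDC (N : PTNet P Tr) (M0 : P → ℕ) (L H : Finset Tr) : Prop :=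
  ∀ M1 h M2, N.Reachable M0 M1 → h ∈ H → N.Fires M1 h M2 →
    WeaklyBisimilar (L : Set Tr) ((N.restrict H).toLTS M1) ((N.restrict H).toLTS M2)

/-- The least relation generated from `M0 R M0` by:
(i) if `M1 R M2` and `M2[h⟩M2'` with `h ∈ H` then `M1 R M2'`;
(ii) if `M1 R M2`, `M1[l⟩M1'` (in `N \ H`) and `M2[l⟩M2'` with `l ∈ L`
then `M1' R M2'`. -/
inductive RRel (N : PTNet P Tr) (M0 : P → ℕ) (L H : Finset Tr) : (P → ℕ) → (P → ℕ) → Prop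
  | base : RRel N M0 L H M0 M0
  | high {M1 M2 M2' : P → ℕ} {h : Tr} : h ∈ H → RRel N M0 L H M1 M2 →
      N.Fires M2 h M2' → RRel N M0 L H M1 M2'
  | low {M1 M2 M1' M2' : P → ℕ} {l : Tr} : l ∈ L → RRel N M0 L H M1 M2 →
      (N.restrict H).Fires M1 l M1' → N.Fires M2 l M2' → RRel N M0 L H M1' M2'

/-- The property `P(h,l)`: for all `w ∈ (L ∪ H)*` and `s ∈ L*`, if `M0[w⟩M1`,
`M1[h⟩M2`, `M1[s⟩M3` and `M2[s⟩M4`, then `M3[l⟩` iff `M4[l⟩`. -/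
def PropP (N : PTNet P Tr) (M0 : P → ℕ) (L H : Finset Tr) (h l : Tr) : Prop :=
  ∀ (w s : List Tr) (M1 M2 M3 M4 : P → ℕ),
    (∀ t ∈ w, t ∈ L ∪ H) → (∀ t ∈ s, t ∈ L) →
    N.FiresSeq M0 w M1 → N.Fires M1 h M2 →
    N.FiresSeq M1 s M3 → N.FiresSeq M2 s M4 →
    (N.Enabled M3 l ↔ N.Enabled M4 l)

/-- Intransitive Non-Interference for a three-level net system:
`(N \ D, M)` has NDC (w.r.t. low `L`, high `H`) for `M = M0` and for every
marking `M` with `M0[υd⟩M` in `N`, `d ∈ D`. -/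
def INI (N : PTNet P Tr) (M0 : P → ℕ) (L D H : Finset Tr) : Prop :=
  NDC (N.restrict D) M0 L H ∧
  ∀ (υ : List Tr) (d : Tr) (M : P → ℕ), d ∈ D → N.FiresSeq M0 (υ ++ [d]) M →
    NDC (N.restrict D) M L H

/-- Bisimulation-based Intransitive Non-Interference: as `INI` with `BNDC`. -/
def BINI (N : PTNet P Tr) (M0 : P → ℕ) (L D H : Finset Tr) : Prop :=
  BNDC (N.restrict D) M0 L H ∧
  ∀ (υ : List Tr) (d : Tr) (M : P → ℕ), d ∈ D → N.FiresSeq M0 (υ ++ [d]) M →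
    BNDC (N.restrict D) M L H

/-- The property `Q(h,l)`: for all `χ ∈ T*` and `s ∈ L*`, if `M0[χ⟩M1`,
`M1[h⟩M2`, `M1[s⟩M3` and `M2[s⟩M4`, then `M3[l⟩` iff `M4[l⟩`. -/
def PropQ (N : PTNet P Tr) (M0 : P → ℕ) (L : Finset Tr) (h l : Tr) : Prop :=
  ∀ (χ s : List Tr) (M1 M2 M3 M4 : P → ℕ),
    (∀ t ∈ χ, t ∈ N.transitions) → (∀ t ∈ s, t ∈ L) →
    N.FiresSeq M0 χ M1 → N.Fires M1 h M2 →
    N.FiresSeq M1 s M3 → N.FiresSeq M2 s M4 →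
    (N.Enabled M3 l ↔ N.Enabled M4 l)

end Security


/-! ## Auxiliary lemmas -/

set_option linter.unusedSectionVars false

section AuxBasic
variable {P Tr : Type _} [DecidableEq P] [DecidableEq Tr]

namespace PTNet

theorem firesSeq_append (N : PTNet P Tr) {M M'' : P → ℕ} {s t : List Tr} :
    N.FiresSeq M (s ++ t) M'' ↔ ∃ M', N.FiresSeq M s M' ∧ N.FiresSeq M' t M'' := by
  induction s generalizing M with
  | nil =>
    constructor
    · intro h; exact ⟨M, rfl, h⟩
    · rintro ⟨M', h1, h2⟩
      have : M' = M := h1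
      subst this; exact h2
  | cons a s ih =>
    constructor
    · rintro ⟨Mm, hf, hrest⟩
      rcases ih.mp hrest with ⟨M', h1, h2⟩
      exact ⟨M', ⟨Mm, hf, h1⟩, h2⟩
    · rintro ⟨M', ⟨Mm, hf, h1⟩, h2⟩
      exact ⟨Mm, hf, ih.mpr ⟨M', h1, h2⟩⟩

theorem firesSeq_det (N : PTNet P Tr) {s : List Tr} :
    ∀ {M M' M'' : P → ℕ}, N.FiresSeq M s M' → N.FiresSeq M s M'' → M' = M'' := by
  induction s with
  | nil => intro M M' M'' h1 h2; exact h1.trans h2.symm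
  | cons a s ih =>
    rintro M M' M'' ⟨Ma, ⟨_, ha⟩, h1⟩ ⟨Mb, ⟨_, hb⟩, h2⟩
    subst ha; subst hb; exact ih h1 h2

theorem firesSeq_mem_transitions (N : PTNet P Tr) {s : List Tr} :
    ∀ {M M' : P → ℕ}, N.FiresSeq M s M' → ∀ t ∈ s, t ∈ N.transitions := by
  induction s with
  | nil => intro M M' _ t ht; simp at ht
  | cons a s ih =>
    rintro M M' ⟨Mm, hf, hrest⟩ t ht
    rcases List.mem_cons.mp ht with h | h
    · subst h; exact hf.1.1
    · exact ih hrest t h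

theorem restrict_enabled_iff (N : PTNet P Tr) {T' : Finset Tr} {t : Tr} (ht : t ∉ T')
    (M : P → ℕ) : (N.restrict T').Enabled M t ↔ N.Enabled M t := by
  constructor
  · rintro ⟨htr, hpre⟩
    have htr' : t ∈ N.transitions \ T' := htr
    have h1 := (Finset.mem_sdiff.mp htr').1
    refine ⟨h1, fun p hp => ?_⟩
    have := hpre p hp
    simpa [PTNet.restrict, h1, ht] using this
  · rintro ⟨htr, hpre⟩
    have htr' : t ∈ N.transitions \ T' := Finset.mem_sdiff.mpr ⟨htr, ht⟩
    refine ⟨htr', fun p hp => ?_⟩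
    simpa [PTNet.restrict, htr, ht] using hpre p hp

theorem restrict_fire_eq (N : PTNet P Tr) {T' : Finset Tr} {t : Tr}
    (ht : t ∈ N.transitions \ T') (M : P → ℕ) :
    (N.restrict T').fire M t = N.fire M t := by
  have h1 := (Finset.mem_sdiff.mp ht).1
  have h2 := (Finset.mem_sdiff.mp ht).2
  funext p
  simp [PTNet.fire, PTNet.restrict, h1, h2]

theorem restrict_fires_iff (N : PTNet P Tr) {T' : Finset Tr} {t : Tr} (ht : t ∉ T')
    {M M' : P → ℕ} : (N.restrict T').Fires M t M' ↔ N.Fires M t M' := by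
  unfold PTNet.Fires
  rw [restrict_enabled_iff N ht]
  constructor
  · rintro ⟨hen, rfl⟩
    exact ⟨hen, restrict_fire_eq N (Finset.mem_sdiff.mpr ⟨hen.1, ht⟩) M⟩
  · rintro ⟨hen, rfl⟩
    exact ⟨hen, (restrict_fire_eq N (Finset.mem_sdiff.mpr ⟨hen.1, ht⟩) M).symm⟩

theorem restrict_firesSeq_iff (N : PTNet P Tr) {T' : Finset Tr} {s : List Tr}
    (h : ∀ t ∈ s, t ∉ T') : ∀ {M M' : P → ℕ},
    (N.restrict T').FiresSeq M s M' ↔ N.FiresSeq M s M' := by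
  induction s with
  | nil => intro M M'; exact Iff.rfl
  | cons a s ih =>
    intro M M'
    have ha : a ∉ T' := h a List.mem_cons_self
    constructor
    · rintro ⟨Mm, hf, hrest⟩
      exact ⟨Mm, (restrict_fires_iff N ha).mp hf,
        (ih (fun t ht => h t (List.mem_cons_of_mem a ht))).mp hrest⟩
    · rintro ⟨Mm, hf, hrest⟩
      exact ⟨Mm, (restrict_fires_iff N ha).mpr hf,
        (ih (fun t ht => h t (List.mem_cons_of_mem a ht))).mpr hrest⟩

@[simp] theorem restrict_transitions (N : PTNet P Tr) (T' : Finset Tr) :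
    (N.restrict T').transitions = N.transitions \ T' := rfl

@[simp] theorem restrict_places (N : PTNet P Tr) (T' : Finset Tr) :
    (N.restrict T').places = N.places := rfl

end PTNet

end AuxBasic


section AuxKL
set_option linter.unusedSectionVars false
variable {P Tr : Type _} [DecidableEq P] [DecidableEq Tr]

theorem exists_split_last_not_mem {α : Type _} [DecidableEq α] (L : Finset α) :
    ∀ (s : List α), (∃ t ∈ s, t ∉ L) →
      ∃ β h γ, s = β ++ h :: γ ∧ h ∉ L ∧ ∀ t ∈ γ, t ∈ L := by
  intro s
  induction s using List.reverseRecOn with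
  | nil => rintro ⟨t, ht, _⟩; simp at ht
  | append_singleton δ a ih =>
    intro hex
    by_cases ha : a ∈ L
    · have hδ : ∃ t ∈ δ, t ∉ L := by
        rcases hex with ⟨t, ht, htL⟩
        rcases List.mem_append.mp ht with h | h
        · exact ⟨t, h, htL⟩
        · simp only [List.mem_singleton] at h; subst h; exact absurd ha htL
      rcases ih hδ with ⟨β, h, γ, heq, hh, hγ⟩
      refine ⟨β, h, γ ++ [a], by simp [heq], hh, ?_⟩
      intro t ht
      rcases List.mem_append.mp ht with h' | h'
      · exact hγ t h'
      · simp only [List.mem_singleton] at h'; subst h'; exact ha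
    · exact ⟨δ, a, [], by simp, ha, by simp⟩

namespace PTNet

variable (Nr : PTNet P Tr) (M0 : P → ℕ) (L H : Finset Tr)

theorem low_run_transfer
    (hP : ∀ h ∈ H, ∀ l ∈ L, PropP Nr M0 L H h l)
    {β : List Tr} {A B : P → ℕ} {h : Tr} (hhH : h ∈ H)
    (hβ : ∀ t ∈ β, t ∈ L ∪ H) (hA : Nr.FiresSeq M0 β A) (hAB : Nr.Fires A h B) :
    ∀ γ, (∀ t ∈ γ, t ∈ L) → ∀ {M4 : P → ℕ}, Nr.FiresSeq B γ M4 →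
      ∃ M3, Nr.FiresSeq A γ M3 := by
  intro γ
  induction γ using List.reverseRecOn with
  | nil => intro _ M4 _; exact ⟨A, rfl⟩
  | append_singleton γ' l ih =>
    intro hmem M4 hrun
    rcases (Nr.firesSeq_append).mp hrun with ⟨M4', h1, h2⟩
    rcases h2 with ⟨M4'', hfire, hnil⟩
    obtain ⟨M3', h3⟩ := ih (fun t ht => hmem t (List.mem_append_left _ ht)) h1
    have hl : l ∈ L := hmem l (by simp)
    have hiff := hP h hhH l hl β γ' A B M3' M4'
      hβ (fun t ht => hmem t (List.mem_append_left _ ht)) hA hAB h3 h1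
    refine ⟨Nr.fire M3' l, (Nr.firesSeq_append).mpr ⟨M3', h3,
      ⟨Nr.fire M3' l, ⟨hiff.mpr hfire.1, rfl⟩, rfl⟩⟩⟩

theorem enabled_iff_of_parallel
    (hLH : Disjoint L H)
    (hP : ∀ h ∈ H, ∀ l ∈ L, PropP Nr M0 L H h l) :
    ∀ n (α : List Tr), (α.filter (· ∉ L)).length = n →
      (∀ t ∈ α, t ∈ L ∪ H) →
      ∀ M1 M2, Nr.FiresSeq M0 α M2 → Nr.FiresSeq M0 (α.filter (· ∈ L)) M1 →
      ∀ l ∈ L, (Nr.Enabled M1 l ↔ Nr.Enabled M2 l) := by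
  intro n
  induction n using Nat.strong_induction_on with
  | _ n ihn =>
    intro α hlen hmem M1 M2 hrun2 hrun1 l hl
    by_cases hall : ∀ t ∈ α, t ∈ L
    · have hfe : α.filter (· ∈ L) = α := List.filter_eq_self.mpr
        (fun t ht => by simpa using hall t ht)
      rw [hfe] at hrun1
      rw [Nr.firesSeq_det hrun1 hrun2]
    · push_neg at hall
      obtain ⟨β, h, γ, heq, hh, hγ⟩ := exists_split_last_not_mem L α hall
      subst heq
      have hhH : h ∈ H := by
        have hm := hmem h (by simp)
        rcases Finset.mem_union.mp hm with h' | h'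
        · exact absurd h' hh
        · exact h'
      have hβ : ∀ t ∈ β, t ∈ L ∪ H := fun t ht => hmem t (by simp [ht])
      rcases (Nr.firesSeq_append).mp hrun2 with ⟨A, hA, hrest⟩
      rcases hrest with ⟨B, hAB, hBγ⟩
      obtain ⟨M3, hM3⟩ := Nr.low_run_transfer M0 L H hP hhH hβ hA hAB γ hγ hBγ
      have hiff34 : Nr.Enabled M3 l ↔ Nr.Enabled M2 l :=
        hP h hhH l hl β γ A B M3 M2 hβ hγ hA hAB hM3 hBγ
      -- recursive call on β ++ γ
      have hγself : γ.filter (· ∈ L) = γ := List.filter_eq_self.mpr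
        (fun t ht => by simpa using hγ t ht)
      have hγnil : γ.filter (· ∉ L) = [] := List.filter_eq_nil_iff.mpr
        (fun t ht => by simpa using hγ t ht)
      have hfilter_eq : (β ++ γ).filter (· ∈ L) = (β ++ h :: γ).filter (· ∈ L) := by
        have hhL : ¬ (h ∈ L) := hh
        simp [List.filter_append, List.filter_cons, hhL]
      have hlen' : ((β ++ γ).filter (· ∉ L)).length < n := by
        have hhL : (h ∉ L) := hh
        rw [← hlen]
        simp [List.filter_append, List.filter_cons, hγnil, hhL]
      have hmem' : ∀ t ∈ β ++ γ, t ∈ L ∪ H := by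
        intro t ht
        rcases List.mem_append.mp ht with h' | h'
        · exact hβ t h'
        · exact hmem t (by simp [h'])
      have hrun3 : Nr.FiresSeq M0 (β ++ γ) M3 := (Nr.firesSeq_append).mpr ⟨A, hA, hM3⟩
      have hrun1' : Nr.FiresSeq M0 ((β ++ γ).filter (· ∈ L)) M1 := by
        rw [hfilter_eq]; exact hrun1
      have hiff13 := ihn _ hlen' (β ++ γ) rfl hmem' M1 M3 hrun3 hrun1' l hl
      exact hiff13.trans hiff34

theorem rrel_exists_run (hLH : Disjoint L H) {M1 M2 : P → ℕ}
    (hR : RRel Nr M0 L H M1 M2) :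
    ∃ α : List Tr, (∀ t ∈ α, t ∈ L ∪ H) ∧ Nr.FiresSeq M0 α M2 ∧
      Nr.FiresSeq M0 (α.filter (· ∈ L)) M1 := by
  induction hR with
  | base => exact ⟨[], by simp, rfl, rfl⟩
  | @high A B B' t hh hR' hfires ih =>
    obtain ⟨α, hmem, h2, h1⟩ := ih
    have htL : ¬ (t ∈ L) := Finset.disjoint_right.mp hLH hh
    refine ⟨α ++ [t], ?_, (Nr.firesSeq_append).mpr ⟨B, h2, ⟨B', hfires, rfl⟩⟩, ?_⟩
    · intro u hu
      rcases List.mem_append.mp hu with h' | h'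
      · exact hmem u h'
      · simp only [List.mem_singleton] at h'; subst h'; simp [hh]
    · simpa [List.filter_append, List.filter_cons, htL] using h1
  | @low A B A' B' t hl hR' hfr hfires ih =>
    obtain ⟨α, hmem, h2, h1⟩ := ih
    have htH : t ∉ H := Finset.disjoint_left.mp hLH hl
    have hfr' : Nr.Fires A t A' := (Nr.restrict_fires_iff htH).mp hfr
    refine ⟨α ++ [t], ?_, (Nr.firesSeq_append).mpr ⟨B, h2, ⟨B', hfires, rfl⟩⟩, ?_⟩
    · intro u hu
      rcases List.mem_append.mp hu with h' | h'
      · exact hmem u h'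
      · simp only [List.mem_singleton] at h'; subst h'; simp [hl]
    · have : (α ++ [t]).filter (· ∈ L) = α.filter (· ∈ L) ++ [t] := by
        simp [List.filter_append, List.filter_cons, hl]
      rw [this]
      exact (Nr.firesSeq_append).mpr ⟨A, h1, ⟨A', hfr', rfl⟩⟩

theorem rrel_enabled_iff (hLH : Disjoint L H)
    (hP : ∀ h ∈ H, ∀ l ∈ L, PropP Nr M0 L H h l) {M1 M2 : P → ℕ}
    (hR : RRel Nr M0 L H M1 M2) :
    ∀ l ∈ L, (Nr.Enabled M1 l ↔ Nr.Enabled M2 l) := by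
  obtain ⟨α, hmem, h2, h1⟩ := Nr.rrel_exists_run M0 L H hLH hR
  exact Nr.enabled_iff_of_parallel M0 L H hLH hP _ α rfl hmem M1 M2 h2 h1

end PTNet

end AuxKL


section AuxBNDC
set_option linter.unusedSectionVars false
variable {P Tr : Type _} [DecidableEq P] [DecidableEq Tr]

namespace PTNet

theorem comp_pre_left (N1 N2 : PTNet P Tr) {t : Tr} {p : P} (hp : p ∈ N1.places) :
    (N1.comp N2).pre t p = N1.pre t p := by simp [PTNet.comp, hp]

theorem comp_post_left (N1 N2 : PTNet P Tr) {t : Tr} {p : P} (hp : p ∈ N1.places) :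
    (N1.comp N2).post t p = N1.post t p := by simp [PTNet.comp, hp]

theorem NC_pre_left (Nr N' : PTNet P Tr) (T' : Finset Tr) {t : Tr} {p : P}
    (htc : t ∈ (Nr.comp N').transitions \ T') (hp : p ∈ Nr.places) :
    ((Nr.comp N').restrict T').pre t p = Nr.pre t p := by
  have h1 : ((Nr.comp N').restrict T').pre t p = (Nr.comp N').pre t p := if_pos htc
  have h2 : (Nr.comp N').pre t p = Nr.pre t p := if_pos hp
  rw [h1, h2]

theorem NC_post_left (Nr N' : PTNet P Tr) (T' : Finset Tr) {t : Tr} {p : P}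
    (htc : t ∈ (Nr.comp N').transitions \ T') (hp : p ∈ Nr.places) :
    ((Nr.comp N').restrict T').post t p = Nr.post t p := by
  have h1 : ((Nr.comp N').restrict T').post t p = (Nr.comp N').post t p := if_pos htc
  have h2 : (Nr.comp N').post t p = Nr.post t p := if_pos hp
  rw [h1, h2]

theorem NC_pre_right (Nr N' : PTNet P Tr) (T' : Finset Tr) {t : Tr} {p : P}
    (hp : p ∉ Nr.places) (ht' : t ∉ N'.transitions) :
    ((Nr.comp N').restrict T').pre t p = 0 := by
  by_cases htc : t ∈ (Nr.comp N').transitions \ T'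
  · have h1 : ((Nr.comp N').restrict T').pre t p = (Nr.comp N').pre t p := if_pos htc
    have h2 : (Nr.comp N').pre t p = N'.pre t p := if_neg hp
    rw [h1, h2, N'.pre_eq_zero t ht']
  · exact if_neg htc

theorem fire_agree (Nr N' : PTNet P Tr) (T' : Finset Tr) {t : Tr}
    (htc : t ∈ (Nr.comp N').transitions \ T')
    {M2 MM : P → ℕ} (hag : ∀ p ∈ Nr.places, M2 p = MM p) {p : P} (hp : p ∈ Nr.places) :
    Nr.fire M2 t p = ((Nr.comp N').restrict T').fire MM t p := by
  have hpc : p ∈ (Nr.comp N').places := Finset.mem_union_left _ hp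
  have e1 : Nr.fire M2 t p = M2 p + Nr.post t p - Nr.pre t p := if_pos hp
  have e2 : ((Nr.comp N').restrict T').fire MM t p =
      MM p + ((Nr.comp N').restrict T').post t p - ((Nr.comp N').restrict T').pre t p :=
    if_pos hpc
  rw [e1, e2, NC_pre_left Nr N' T' htc hp, NC_post_left Nr N' T' htc hp, hag p hp]

theorem fire_agree_notNr (Nr N' : PTNet P Tr) (T' : Finset Tr) {t : Tr}
    (htNr : t ∉ Nr.transitions) {MM : P → ℕ} {p : P} (hp : p ∈ Nr.places) :
    ((Nr.comp N').restrict T').fire MM t p = MM p := by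
  have hpc : p ∈ (Nr.comp N').places := Finset.mem_union_left _ hp
  have e2 : ((Nr.comp N').restrict T').fire MM t p =
      MM p + ((Nr.comp N').restrict T').post t p - ((Nr.comp N').restrict T').pre t p :=
    if_pos hpc
  by_cases htc : t ∈ (Nr.comp N').transitions \ T'
  · rw [e2, NC_pre_left Nr N' T' htc hp, NC_post_left Nr N' T' htc hp,
      Nr.pre_eq_zero t htNr, Nr.post_eq_zero t htNr]
    omega
  · have h1 : ((Nr.comp N').restrict T').pre t p = 0 := if_neg htc
    have h2 : ((Nr.comp N').restrict T').post t p = 0 := if_neg htc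
    rw [e2, h1, h2]
    omega

theorem enabled_left_of_comp (Nr N' : PTNet P Tr) (T' : Finset Tr) {t : Tr}
    (htNr : t ∈ Nr.transitions) {M2 MM : P → ℕ}
    (hag : ∀ p ∈ Nr.places, M2 p = MM p)
    (hen : ((Nr.comp N').restrict T').Enabled MM t) : Nr.Enabled M2 t := by
  obtain ⟨htc, hpre⟩ := hen
  refine ⟨htNr, fun p hp => ?_⟩
  have := hpre p (Finset.mem_union_left _ hp)
  rw [NC_pre_left Nr N' T' htc hp] at this
  rw [hag p hp]; exact this

theorem comp_restrict_enabled_iff (Nr N' : PTNet P Tr) (Hs : Finset Tr) {t : Tr}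
    (htNr : t ∈ Nr.transitions) (htH : t ∉ Hs) (htN' : t ∉ N'.transitions)
    {M2 MM : P → ℕ} (hag : ∀ p ∈ Nr.places, M2 p = MM p) :
    ((Nr.comp N').restrict (Hs \ N'.transitions)).Enabled MM t ↔ Nr.Enabled M2 t := by
  constructor
  · exact enabled_left_of_comp Nr N' _ htNr hag
  · rintro ⟨_, hpre⟩
    have htc : t ∈ (Nr.comp N').transitions \ (Hs \ N'.transitions) := by
      refine Finset.mem_sdiff.mpr ⟨Finset.mem_union_left _ htNr, ?_⟩
      simp [htH]
    refine ⟨htc, fun p hp => ?_⟩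
    by_cases hpN : p ∈ Nr.places
    · rw [NC_pre_left Nr N' _ htc hpN, ← hag p hpN]; exact hpre p hpN
    · rw [NC_pre_right Nr N' _ hpN htN']; exact Nat.zero_le _

theorem propP_implies_BNDC (Nr : PTNet P Tr) (M0 : P → ℕ) (L H : Finset Tr)
    (hT : Nr.transitions = L ∪ H) (hLH : Disjoint L H)
    (hP : ∀ h ∈ H, ∀ l ∈ L, PropP Nr M0 L H h l) :
    BNDC Nr M0 L H := by
  intro N' M0' hpl hdisL
  refine ⟨fun M1 MM => ∃ M2, RRel Nr M0 L H M1 M2 ∧ ∀ p ∈ Nr.places, M2 p = MM p,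
    ⟨?_, ?_⟩, ⟨?_, ?_⟩⟩
  · -- init for sim1
    exact ⟨M0, RRel.base, fun p hp => by simp [PTNet.toLTS, PTNet.combine, hp]⟩
  · -- step for sim1 : S1 → S2
    rintro M1 MM ⟨M2, hR, hag⟩
    constructor
    · -- observable
      intro σ hσ M1a hstep
      have hσL : σ ∈ L := hσ
      have hσH : σ ∉ H := Finset.disjoint_left.mp hLH hσL
      have hσN' : σ ∉ N'.transitions := Finset.disjoint_right.mp hdisL hσL
      have hstep' : (Nr.restrict H).Fires M1 σ M1a := hstep
      have hF1 : Nr.Fires M1 σ M1a := (Nr.restrict_fires_iff hσH).mp hstep'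
      have hen2 : Nr.Enabled M2 σ :=
        (Nr.rrel_enabled_iff M0 L H hLH hP hR σ hσL).mp hF1.1
      have hF2 : Nr.Fires M2 σ (Nr.fire M2 σ) := ⟨hen2, rfl⟩
      have henC : ((Nr.comp N').restrict (H \ N'.transitions)).Enabled MM σ :=
        (comp_restrict_enabled_iff Nr N' H hen2.1 hσH hσN' hag).mpr hen2
      refine ⟨MM, _, _, Relation.ReflTransGen.refl, ⟨henC, rfl⟩,
        Relation.ReflTransGen.refl, ⟨Nr.fire M2 σ, RRel.low hσL hR hstep' hF2, ?_⟩⟩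
      intro p hp
      exact fire_agree Nr N' _ henC.1 hag hp
    · -- tau : impossible on the left
      intro τ hτ M1a hstep
      have hstep' : (Nr.restrict H).Fires M1 τ M1a := hstep
      have hmem := hstep'.1.1
      rw [restrict_transitions, hT] at hmem
      have := Finset.mem_sdiff.mp hmem
      rcases Finset.mem_union.mp this.1 with h' | h'
      · exact absurd (Finset.mem_coe.mpr h') hτ
      · exact absurd h' this.2
  · -- init for sim2
    exact ⟨M0, RRel.base, fun p hp => by simp [PTNet.toLTS, PTNet.combine, hp]⟩
  · -- step for sim2 : S2 → S1
    rintro MM M1 ⟨M2, hR, hag⟩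
    constructor
    · -- observable
      intro σ hσ MM' hstep
      have hσL : σ ∈ L := hσ
      have hσH : σ ∉ H := Finset.disjoint_left.mp hLH hσL
      have hσN' : σ ∉ N'.transitions := Finset.disjoint_right.mp hdisL hσL
      have hstep' : ((Nr.comp N').restrict (H \ N'.transitions)).Fires MM σ MM' := hstep
      have hσNr : σ ∈ Nr.transitions := by rw [hT]; exact Finset.mem_union_left _ hσL
      have hen2 : Nr.Enabled M2 σ :=
        enabled_left_of_comp Nr N' _ hσNr hag hstep'.1
      have hen1 : Nr.Enabled M1 σ :=
        (Nr.rrel_enabled_iff M0 L H hLH hP hR σ hσL).mpr hen2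
      have hen1r : (Nr.restrict H).Enabled M1 σ :=
        (Nr.restrict_enabled_iff hσH M1).mpr hen1
      have hFr : (Nr.restrict H).Fires M1 σ ((Nr.restrict H).fire M1 σ) := ⟨hen1r, rfl⟩
      have hF2 : Nr.Fires M2 σ (Nr.fire M2 σ) := ⟨hen2, rfl⟩
      refine ⟨M1, _, _, Relation.ReflTransGen.refl, hFr, Relation.ReflTransGen.refl,
        ⟨Nr.fire M2 σ, RRel.low hσL hR hFr hF2, ?_⟩⟩
      intro p hp
      rw [hstep'.2]
      exact fire_agree Nr N' _ hstep'.1.1 hag hp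
    · -- tau
      intro t ht MM' hstep
      have hstep' : ((Nr.comp N').restrict (H \ N'.transitions)).Fires MM t MM' := hstep
      have htL : t ∉ L := fun h => ht (Finset.mem_coe.mpr h)
      by_cases htNr : t ∈ Nr.transitions
      · -- t is high
        have htH : t ∈ H := by
          rw [hT] at htNr
          rcases Finset.mem_union.mp htNr with h' | h'
          · exact absurd h' htL
          · exact h'
        have htNr' : t ∈ Nr.transitions := by rw [hT]; exact Finset.mem_union_right _ htH
        have hen2 : Nr.Enabled M2 t :=
          enabled_left_of_comp Nr N' _ htNr' hag hstep'.1
        refine ⟨M1, Relation.ReflTransGen.refl,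
          ⟨Nr.fire M2 t, RRel.high htH hR ⟨hen2, rfl⟩, ?_⟩⟩
        intro p hp
        rw [hstep'.2]
        exact fire_agree Nr N' _ hstep'.1.1 hag hp
      · -- t is not an Nr transition: no effect on Nr places
        refine ⟨M1, Relation.ReflTransGen.refl, ⟨M2, hR, ?_⟩⟩
        intro p hp
        rw [hstep'.2, fire_agree_notNr Nr N' _ htNr hp]
        exact hag p hp

end PTNet

end AuxBNDC


section AuxAttack
set_option linter.unusedSectionVars false
variable {P Tr : Type _} [DecidableEq P] [DecidableEq Tr]

namespace PTNet

/-- The attacker net: a single place `q` with each transition of `S` consuming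
one token from `q`. -/
def chainNet (q : P) (S : Finset Tr) : PTNet P Tr where
  places := {q}
  transitions := S
  pre := fun t p => if t ∈ S ∧ p = q then 1 else 0
  post := fun _ _ => 0
  pre_eq_zero := by intro t ht p; simp [ht]
  post_eq_zero := fun _ _ _ => rfl

/-- Extension of a marking of `Nr` with `c` tokens on `q` and `k` elsewhere. -/
def ext (Nr : PTNet P Tr) (q : P) (k : ℕ) (M : P → ℕ) (c : ℕ) : P → ℕ :=
  fun p => if p ∈ Nr.places then M p else if p = q then c else k

theorem restrict_tauStar_eq (Nr : PTNet P Tr) (M0 : P → ℕ) (L H : Finset Tr)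
    (hTL : Nr.transitions \ H ⊆ L) {X Y : P → ℕ}
    (hstar : ((Nr.restrict H).toLTS M0).TauStar (↑L : Set Tr) X Y) : X = Y := by
  induction hstar with
  | refl => rfl
  | tail hab hbc ih =>
    rename_i b c
    have hbc' : ∃ τ, τ ∉ (↑L : Set Tr) ∧ ((Nr.restrict H).toLTS M0).tr b τ c := hbc
    obtain ⟨t, htL, hfires⟩ := hbc'
    have hf : (Nr.restrict H).Fires b t c := hfires
    have : t ∈ L := hTL hf.1.1
    exact absurd (Finset.mem_coe.mpr this) htL

theorem forced_run (Nr : PTNet P Tr) (M0 : P → ℕ) (L H : Finset Tr)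
    (hTL : Nr.transitions \ H ⊆ L) (NC : PTNet P Tr) (MC : P → ℕ)
    {R : (P → ℕ) → (P → ℕ) → Prop}
    (hbis : IsWeakBisimulation (↑L : Set Tr) ((Nr.restrict H).toLTS M0) (NC.toLTS MC) R) :
    ∀ (ρ : List Tr) {X MM MM' : P → ℕ}, R X MM → NC.FiresSeq MM ρ MM' →
      ∃ Y, (Nr.restrict H).FiresSeq X (ρ.filter (· ∈ L)) Y ∧ R Y MM' := by
  intro ρ
  induction ρ with
  | nil =>
    intro X MM MM' hR hrun
    have : MM' = MM := hrun
    subst this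
    exact ⟨X, rfl, hR⟩
  | cons t ρ' ih =>
    rintro X MM MM' hR ⟨MM1, hstep, hrest⟩
    by_cases htL : t ∈ L
    · have hobs := ((hbis.2.2 MM X hR).1 t (Finset.mem_coe.mpr htL) MM1 hstep)
      obtain ⟨X1, X2, X3, hst1, htr, hst2, hR'⟩ := hobs
      have e1 : X = X1 := restrict_tauStar_eq Nr M0 L H hTL hst1
      have e2 : X2 = X3 := restrict_tauStar_eq Nr M0 L H hTL hst2
      rw [← e1] at htr
      rw [← e2] at hR'
      obtain ⟨Y, hseq, hRY⟩ := ih hR' hrest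
      have hfil : (t :: ρ').filter (· ∈ L) = t :: ρ'.filter (· ∈ L) := by
        simp [List.filter_cons, htL]
      rw [hfil]
      exact ⟨Y, ⟨X2, htr, hseq⟩, hRY⟩
    · have htau := ((hbis.2.2 MM X hR).2 t (fun hc => htL (Finset.mem_coe.mp hc)) MM1 hstep)
      obtain ⟨X', hst, hR'⟩ := htau
      have e1 : X = X' := restrict_tauStar_eq Nr M0 L H hTL hst
      subst e1
      obtain ⟨Y, hseq, hRY⟩ := ih hR' hrest
      have hfil : (t :: ρ').filter (· ∈ L) = ρ'.filter (· ∈ L) := by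
        simp [List.filter_cons, htL]
      rw [hfil]
      exact ⟨Y, hseq, hRY⟩

theorem exact_enabled_at_dead (Nr : PTNet P Tr) (M0 : P → ℕ) (L H : Finset Tr)
    (hTL : Nr.transitions \ H ⊆ L) (NC : PTNet P Tr) (MC : P → ℕ)
    {R : (P → ℕ) → (P → ℕ) → Prop}
    (hbis : IsWeakBisimulation (↑L : Set Tr) ((Nr.restrict H).toLTS M0) (NC.toLTS MC) R)
    {X MM : P → ℕ} (hR : R X MM)
    (hdead : ∀ t, t ∉ L → ∀ M', ¬ NC.Fires MM t M') {l : Tr} (hl : l ∈ L) :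
    (Nr.restrict H).Enabled X l ↔ NC.Enabled MM l := by
  constructor
  · intro hen
    have hfires : ((Nr.restrict H).toLTS M0).tr X l ((Nr.restrict H).fire X l) := ⟨hen, rfl⟩
    obtain ⟨MM1, MM2, MM3, hst1, htr, hst2, hR'⟩ :=
      (hbis.1.2 X MM hR).1 l (Finset.mem_coe.mpr hl) _ hfires
    have e1 : MM = MM1 := by
      rcases Relation.ReflTransGen.cases_head hst1 with he | ⟨c, hstep, _⟩
      · exact he
      · have hstep' : ∃ τ, τ ∉ (↑L : Set Tr) ∧ (NC.toLTS MC).tr MM τ c := hstep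
        obtain ⟨t, htL, hf⟩ := hstep'
        exact absurd (hf : NC.Fires MM t c)
          (hdead t (fun hc => htL (Finset.mem_coe.mpr hc)) c)
    subst e1
    exact (htr : NC.Fires MM l MM2).1
  · intro hen
    have hfires : (NC.toLTS MC).tr MM l (NC.fire MM l) := ⟨hen, rfl⟩
    obtain ⟨X1, X2, X3, hst1, htr, hst2, hR'⟩ :=
      (hbis.2.2 MM X hR).1 l (Finset.mem_coe.mpr hl) _ hfires
    have e1 : X = X1 := restrict_tauStar_eq Nr M0 L H hTL hst1
    rw [← e1] at htr
    exact (htr : (Nr.restrict H).Fires X l X2).1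

theorem chain_pre_q (Nr : PTNet P Tr) (H S : Finset Tr) {q : P} (hq : q ∉ Nr.places)
    {t : Tr} (htc : t ∈ (Nr.comp (chainNet q S)).transitions \ (H \ S)) :
    ((Nr.comp (chainNet q S)).restrict (H \ S)).pre t q = (if t ∈ S then 1 else 0) := by
  have h1 : ((Nr.comp (chainNet q S)).restrict (H \ S)).pre t q =
      (Nr.comp (chainNet q S)).pre t q := if_pos htc
  have h2 : (Nr.comp (chainNet q S)).pre t q = (chainNet q S).pre t q := if_neg hq
  rw [h1, h2]
  simp [chainNet]

theorem chain_post_q (Nr : PTNet P Tr) (H S : Finset Tr) {q : P} (hq : q ∉ Nr.places)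
    {t : Tr} (htc : t ∈ (Nr.comp (chainNet q S)).transitions \ (H \ S)) :
    ((Nr.comp (chainNet q S)).restrict (H \ S)).post t q = 0 := by
  have h1 : ((Nr.comp (chainNet q S)).restrict (H \ S)).post t q =
      (Nr.comp (chainNet q S)).post t q := if_pos htc
  have h2 : (Nr.comp (chainNet q S)).post t q = (chainNet q S).post t q := if_neg hq
  rw [h1, h2]
  rfl

theorem mem_chain_places {q : P} {S : Finset Tr} :
    q ∈ ((chainNet q S : PTNet P Tr)).places := by simp [chainNet]

theorem chain_step (Nr : PTNet P Tr) (H S : Finset Tr) {q : P} (hq : q ∉ Nr.places)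
    {t : Tr} {M M' : P → ℕ} {c' k : ℕ}
    (hfires : Nr.Fires M t M') (hnot : t ∉ H \ S) :
    ((Nr.comp (chainNet q S)).restrict (H \ S)).Fires
      (Nr.ext q k M (c' + (if t ∈ S then 1 else 0))) t (Nr.ext q k M' c') := by
  set c := c' + (if t ∈ S then 1 else 0) with hc
  have htc : t ∈ (Nr.comp (chainNet q S)).transitions \ (H \ S) :=
    Finset.mem_sdiff.mpr ⟨Finset.mem_union_left _ hfires.1.1, hnot⟩
  have hqc : q ∈ (Nr.comp (chainNet q S)).places :=
    Finset.mem_union_right _ mem_chain_places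
  constructor
  · refine ⟨htc, fun p hp => ?_⟩
    by_cases hpN : p ∈ Nr.places
    · rw [NC_pre_left Nr _ _ htc hpN]
      have : Nr.ext q k M c p = M p := if_pos hpN
      rw [this]
      exact hfires.1.2 p hpN
    · have hpc : p ∈ (Nr.comp (chainNet q S)).places := hp
      have hpq : p = q := by
        rcases Finset.mem_union.mp hpc with h' | h'
        · exact absurd h' hpN
        · simpa [chainNet] using h'
      have hqp := hpq.symm
      subst hqp
      rw [chain_pre_q Nr H S hq htc]
      have : Nr.ext q k M c q = c := by simp [PTNet.ext, hq]
      rw [this, hc]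
      by_cases hts : t ∈ S <;> simp [hts]
  · funext p
    by_cases hpc : p ∈ ((Nr.comp (chainNet q S)).restrict (H \ S)).places
    · have e2 : ((Nr.comp (chainNet q S)).restrict (H \ S)).fire (Nr.ext q k M c) t p =
          Nr.ext q k M c p + ((Nr.comp (chainNet q S)).restrict (H \ S)).post t p
            - ((Nr.comp (chainNet q S)).restrict (H \ S)).pre t p := if_pos hpc
      by_cases hpN : p ∈ Nr.places
      · have e3 : Nr.ext q k M c p = M p := if_pos hpN
        have e4 : Nr.ext q k M' c' p = M' p := if_pos hpN
        have e5 : M' p = M p + Nr.post t p - Nr.pre t p := by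
          rw [hfires.2]; exact if_pos hpN
        rw [e4, e2, e3, NC_pre_left Nr _ _ htc hpN, NC_post_left Nr _ _ htc hpN, e5]
      · have hpq : p = q := by
          rcases Finset.mem_union.mp (hpc : p ∈ (Nr.comp (chainNet q S)).places) with h' | h'
          · exact absurd h' hpN
          · simpa [chainNet] using h'
        have hqp := hpq.symm
        subst hqp
        have e3 : Nr.ext q k M c q = c := by simp [PTNet.ext, hq]
        have e4 : Nr.ext q k M' c' q = c' := by simp [PTNet.ext, hq]
        rw [e4, e2, e3, chain_pre_q Nr H S hq htc, chain_post_q Nr H S hq htc, hc]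
        by_cases hts : t ∈ S <;> simp [hts]
    · have e2 : ((Nr.comp (chainNet q S)).restrict (H \ S)).fire (Nr.ext q k M c) t p =
          Nr.ext q k M c p := if_neg hpc
      have hpN : p ∉ Nr.places := fun hc2 =>
        hpc (Finset.mem_union_left _ hc2 : p ∈ (Nr.comp (chainNet q S)).places)
      have hpq : p ≠ q := fun hc2 => by
        subst hc2; exact hpc (Finset.mem_union_right _ mem_chain_places)
      have e3 : Nr.ext q k M c p = k := by simp [PTNet.ext, hpN, hpq]
      have e4 : Nr.ext q k M' c' p = k := by simp [PTNet.ext, hpN, hpq]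
      rw [e4, e2, e3]

theorem chain_run (Nr : PTNet P Tr) (H S : Finset Tr) {q : P} (hq : q ∉ Nr.places)
    {k : ℕ} : ∀ (α : List Tr) {M M' : P → ℕ}, Nr.FiresSeq M α M' →
    (∀ t ∈ α, t ∉ H \ S) →
    ((Nr.comp (chainNet q S)).restrict (H \ S)).FiresSeq
      (Nr.ext q k M (α.countP (· ∈ S))) α (Nr.ext q k M' 0) := by
  intro α
  induction α with
  | nil =>
    intro M M' hrun _
    have : M' = M := hrun
    subst this
    show Nr.ext q k M' ((List.nil : List Tr).countP (· ∈ S)) = Nr.ext q k M' 0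
    simp
  | cons t α' ih =>
    rintro M M' ⟨M'', hf, hrest⟩ hmem
    have hcount : ((t :: α').countP (· ∈ S)) = α'.countP (· ∈ S) + (if t ∈ S then 1 else 0) := by
      by_cases hts : t ∈ S <;> simp [List.countP_cons, hts]
    rw [hcount]
    exact ⟨Nr.ext q k M'' (α'.countP (· ∈ S)),
      chain_step Nr H S hq hf (hmem t List.mem_cons_self),
      ih hrest (fun u hu => hmem u (List.mem_cons_of_mem t hu))⟩

theorem chain_dead (Nr : PTNet P Tr) (L H S : Finset Tr) (hT : Nr.transitions = L ∪ H)
    {q : P} (hq : q ∉ Nr.places) {M : P → ℕ} {k : ℕ} :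
    ∀ t, t ∉ L → ∀ M'', ¬ ((Nr.comp (chainNet q S)).restrict (H \ S)).Fires
      (Nr.ext q k M 0) t M'' := by
  rintro t htL M'' ⟨⟨htc, hpre⟩, _⟩
  by_cases hts : t ∈ S
  · have hqc : q ∈ ((Nr.comp (chainNet q S)).restrict (H \ S)).places :=
      Finset.mem_union_right _ mem_chain_places
    have := hpre q hqc
    rw [chain_pre_q Nr H S hq htc] at this
    have e : Nr.ext q k M 0 q = 0 := by simp [PTNet.ext, hq]
    rw [e] at this
    simp [hts] at this
  · have hmem := Finset.mem_sdiff.mp htc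
    rcases Finset.mem_union.mp hmem.1 with h' | h'
    · rw [hT] at h'
      rcases Finset.mem_union.mp h' with h'' | h''
      · exact htL h''
      · exact hmem.2 (Finset.mem_sdiff.mpr ⟨h'', hts⟩)
    · exact hts (h' : t ∈ S)

theorem chain_enabled_iff (Nr : PTNet P Tr) (L H S : Finset Tr)
    (hT : Nr.transitions = L ∪ H) (hLH : Disjoint L H) (hSH : S ⊆ H)
    {q : P} (hq : q ∉ Nr.places) {l : Tr} (hl : l ∈ L) {M : P → ℕ} {c k : ℕ} :
    ((Nr.comp (chainNet q S)).restrict (H \ S)).Enabled (Nr.ext q k M c) l ↔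
      Nr.Enabled M l := by
  have hlH : l ∉ H := Finset.disjoint_left.mp hLH hl
  have hlS : l ∉ S := fun hc => hlH (hSH hc)
  constructor
  · rintro ⟨htc, hpre⟩
    have hmem := Finset.mem_sdiff.mp htc
    have hlNr : l ∈ Nr.transitions := by
      rcases Finset.mem_union.mp hmem.1 with h' | h'
      · exact h'
      · exact absurd (h' : l ∈ S) hlS
    refine ⟨hlNr, fun p hp => ?_⟩
    have := hpre p (Finset.mem_union_left _ hp)
    rw [NC_pre_left Nr _ _ htc hp] at this
    have e : Nr.ext q k M c p = M p := if_pos hp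
    rw [e] at this
    exact this
  · rintro ⟨hlNr, hpre⟩
    have htc : l ∈ (Nr.comp (chainNet q S)).transitions \ (H \ S) := by
      refine Finset.mem_sdiff.mpr ⟨Finset.mem_union_left _ hlNr, ?_⟩
      simp [hlH]
    refine ⟨htc, fun p hp => ?_⟩
    by_cases hpN : p ∈ Nr.places
    · rw [NC_pre_left Nr _ _ htc hpN]
      have e : Nr.ext q k M c p = M p := if_pos hpN
      rw [e]
      exact hpre p hpN
    · have hpq : p = q := by
        rcases Finset.mem_union.mp (hp : p ∈ (Nr.comp (chainNet q S)).places) with h' | h'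
        · exact absurd h' hpN
        · simpa [chainNet] using h'
      have hqp := hpq.symm
      subst hqp
      rw [chain_pre_q Nr H S hq htc]
      simp [hlS]

end PTNet

end AuxAttack


section AuxMain
set_option linter.unusedSectionVars false
variable {P Tr : Type _} [DecidableEq P] [DecidableEq Tr]

namespace PTNet

theorem BNDC_implies_propP [Infinite P] (Nr : PTNet P Tr) (M0 : P → ℕ) (L H : Finset Tr)
    (hT : Nr.transitions = L ∪ H) (hLH : Disjoint L H)
    (hB : BNDC Nr M0 L H) {h l : Tr} (hh : h ∈ H) (hl : l ∈ L) :
    PropP Nr M0 L H h l := by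
  intro w s M1 M2 M3 M4 hw hs hwrun hfire hs3 hs4
  obtain ⟨q, hq⟩ := Infinite.exists_notMem_finset Nr.places
  have hTL : Nr.transitions \ H ⊆ L := by
    intro t ht
    have hm := Finset.mem_sdiff.mp ht
    rw [hT] at hm
    rcases Finset.mem_union.mp hm.1 with h' | h'
    · exact h'
    · exact absurd h' hm.2
  have key : ∀ (S : Finset Tr), S ⊆ H → ∀ (α : List Tr) (Mend : P → ℕ),
      Nr.FiresSeq M0 α Mend → (∀ t ∈ α, t ∈ L ∨ t ∈ S) →
      ∃ Y, (Nr.restrict H).FiresSeq M0 (α.filter (· ∈ L)) Y ∧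
        ((Nr.restrict H).Enabled Y l ↔ Nr.Enabled Mend l) := by
    intro S hSH α Mend hrun hmem
    have hdisjP : Disjoint Nr.places ((chainNet q S : PTNet P Tr)).places := by
      simp [chainNet, Finset.disjoint_singleton_right, hq]
    have hdisL : Disjoint ((chainNet q S : PTNet P Tr)).transitions L :=
      Finset.disjoint_of_subset_left hSH hLH.symm
    set k := α.countP (· ∈ S) with hk
    obtain ⟨R, hbis⟩ := hB (chainNet q S) (fun _ => k) hdisjP hdisL
    have hinit : Nr.combine M0 (fun _ => k) = Nr.ext q k M0 k := by
      funext p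
      by_cases hp : p ∈ Nr.places <;> simp [PTNet.combine, PTNet.ext, hp]
    rw [hinit] at hbis
    have hnomem : ∀ t ∈ α, t ∉ H \ S := by
      intro t ht hc
      have hc' := Finset.mem_sdiff.mp hc
      rcases hmem t ht with h' | h'
      · exact (Finset.disjoint_left.mp hLH h') hc'.1
      · exact hc'.2 h'
    have hrunC := chain_run Nr H S hq (k := k) α hrun hnomem
    rw [← hk] at hrunC
    have hbis' : IsWeakBisimulation (↑L : Set Tr) ((Nr.restrict H).toLTS M0)
        (((Nr.comp (chainNet q S)).restrict (H \ S)).toLTS (Nr.ext q k M0 k)) R := hbis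
    obtain ⟨Y, hseq, hRY⟩ := forced_run Nr M0 L H hTL _ _ hbis' α hbis'.1.1 hrunC
    have hdead := chain_dead Nr L H S hT hq (M := Mend) (k := k)
    have hiff1 := exact_enabled_at_dead Nr M0 L H hTL _ _ hbis' hRY hdead hl
    exact ⟨Y, hseq, hiff1.trans (chain_enabled_iff Nr L H S hT hLH hSH hq hl)⟩
  -- the two attackers
  have hhL : h ∉ L := Finset.disjoint_right.mp hLH hh
  set SA : Finset Tr := (w.filter (· ∉ L)).toFinset with hSA
  have hSAH : SA ⊆ H := by
    intro t ht
    rw [hSA] at ht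
    simp only [List.mem_toFinset, List.mem_filter, decide_eq_true_eq] at ht
    rcases Finset.mem_union.mp (hw t ht.1) with h' | h'
    · exact absurd h' ht.2
    · exact h'
  have hmemA : ∀ t ∈ w ++ s, t ∈ L ∨ t ∈ SA := by
    intro t ht
    rcases List.mem_append.mp ht with h' | h'
    · by_cases htl : t ∈ L
      · exact Or.inl htl
      · refine Or.inr ?_
        rw [hSA]
        simp only [List.mem_toFinset, List.mem_filter, decide_eq_true_eq]
        exact ⟨h', htl⟩
    · exact Or.inl (hs t h')
  obtain ⟨Y1, hseq1, hiff1⟩ := key SA hSAH (w ++ s) M3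
    ((Nr.firesSeq_append).mpr ⟨M1, hwrun, hs3⟩) hmemA
  set SB : Finset Tr := insert h SA with hSB
  have hSBH : SB ⊆ H := by
    intro t ht
    rcases Finset.mem_insert.mp ht with h' | h'
    · subst h'; exact hh
    · exact hSAH h'
  have hmemB : ∀ t ∈ w ++ h :: s, t ∈ L ∨ t ∈ SB := by
    intro t ht
    rcases List.mem_append.mp ht with h' | h'
    · rcases hmemA t (List.mem_append_left _ h') with h'' | h''
      · exact Or.inl h''
      · exact Or.inr (Finset.mem_insert_of_mem h'')
    · rcases List.mem_cons.mp h' with h'' | h''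
      · subst h''; exact Or.inr (Finset.mem_insert_self _ _)
      · exact Or.inl (hs t h'')
  obtain ⟨Y2, hseq2, hiff2⟩ := key SB hSBH (w ++ h :: s) M4
    ((Nr.firesSeq_append).mpr ⟨M1, hwrun, ⟨M2, hfire, hs4⟩⟩) hmemB
  have hsfil : s.filter (· ∈ L) = s := List.filter_eq_self.mpr
    (fun t ht => by simpa using hs t ht)
  have hfilA : (w ++ s).filter (· ∈ L) = w.filter (· ∈ L) ++ s := by
    rw [List.filter_append, hsfil]
  have hfilB : (w ++ h :: s).filter (· ∈ L) = w.filter (· ∈ L) ++ s := by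
    rw [List.filter_append, List.filter_cons]
    simp [hhL, hsfil]
  rw [hfilA] at hseq1
  rw [hfilB] at hseq2
  have hYeq : Y1 = Y2 := (Nr.restrict H).firesSeq_det hseq1 hseq2
  subst hYeq
  exact hiff1.symm.trans hiff2

theorem bndc_iff_propP [Infinite P] (Nr : PTNet P Tr) (M0 : P → ℕ) (L H : Finset Tr)
    (hT : Nr.transitions = L ∪ H) (hLH : Disjoint L H) :
    BNDC Nr M0 L H ↔ ∀ h ∈ H, ∀ l ∈ L, PropP Nr M0 L H h l :=
  ⟨fun hB h hh l hl => BNDC_implies_propP Nr M0 L H hT hLH hB hh hl,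
   fun hP => propP_implies_BNDC Nr M0 L H hT hLH hP⟩

end PTNet

end AuxMain


section AuxOuter
set_option linter.unusedSectionVars false
variable {P Tr : Type _} [DecidableEq P] [DecidableEq Tr]

theorem exists_split_last_prop {α : Type _} (p : α → Prop) [DecidablePred p] :
    ∀ (s : List α), (∃ t ∈ s, p t) →
      ∃ β h γ, s = β ++ h :: γ ∧ p h ∧ ∀ t ∈ γ, ¬ p t := by
  intro s
  induction s using List.reverseRecOn with
  | nil => rintro ⟨t, ht, _⟩; simp at ht
  | append_singleton δ a ih =>
    intro hex
    by_cases ha : p a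
    · exact ⟨δ, a, [], by simp, ha, by simp⟩
    · have hδ : ∃ t ∈ δ, p t := by
        rcases hex with ⟨t, ht, htp⟩
        rcases List.mem_append.mp ht with h | h
        · exact ⟨t, h, htp⟩
        · simp only [List.mem_singleton] at h; subst h; exact absurd htp ha
      rcases ih hδ with ⟨β, h, γ, heq, hh, hγ⟩
      refine ⟨β, h, γ ++ [a], by simp [heq], hh, ?_⟩
      intro t ht
      rcases List.mem_append.mp ht with h' | h'
      · exact hγ t h'
      · simp only [List.mem_singleton] at h'; subst h'; exact ha

namespace PTNet

theorem propQ_implies_propP (N : PTNet P Tr) (M0 : P → ℕ) (L D H : Finset Tr)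
    (hLD : Disjoint L D) (hDH : Disjoint D H) {h l : Tr} (hh : h ∈ H) (hl : l ∈ L)
    (χ0 : List Tr) (M : P → ℕ) (hM : N.FiresSeq M0 χ0 M)
    (hQ : PropQ N M0 L h l) : PropP (N.restrict D) M L H h l := by
  intro w s M1 M2 M3 M4 hw hs hwrun hfire hs3 hs4
  have hwD : ∀ t ∈ w, t ∉ D := by
    intro t ht
    have hm := (N.restrict D).firesSeq_mem_transitions hwrun t ht
    exact (Finset.mem_sdiff.mp hm).2
  have hwN : N.FiresSeq M w M1 := (N.restrict_firesSeq_iff hwD).mp hwrun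
  have hhD : h ∉ D := Finset.disjoint_right.mp hDH hh
  have hlD : l ∉ D := Finset.disjoint_right.mp hLD.symm hl
  have hfireN : N.Fires M1 h M2 := (N.restrict_fires_iff hhD).mp hfire
  have hsD : ∀ t ∈ s, t ∉ D := fun t ht => Finset.disjoint_right.mp hLD.symm (hs t ht)
  have hs3N := (N.restrict_firesSeq_iff hsD).mp hs3
  have hs4N := (N.restrict_firesSeq_iff hsD).mp hs4
  have hrun : N.FiresSeq M0 (χ0 ++ w) M1 := (N.firesSeq_append).mpr ⟨M, hM, hwN⟩
  have hmem : ∀ t ∈ χ0 ++ w, t ∈ N.transitions := N.firesSeq_mem_transitions hrun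
  have hconc := hQ (χ0 ++ w) s M1 M2 M3 M4 hmem hs hrun hfireN hs3N hs4N
  rw [N.restrict_enabled_iff hlD M3, N.restrict_enabled_iff hlD M4]
  exact hconc

end PTNet

end AuxOuter

/-- a three-level net system has BINI iff `Q(h,l)` holds for
every `h ∈ H` and every `l ∈ L`. -/
theorem bini_iff_propQ
    {P Tr : Type _} [DecidableEq P] [DecidableEq Tr] [Infinite P]
    (N : PTNet P Tr) (M0 : P → ℕ) (L D H : Finset Tr)
    (hT : N.transitions = L ∪ D ∪ H)
    (hLD : Disjoint L D) (hLH : Disjoint L H) (hDH : Disjoint D H) :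
    BINI N M0 L D H ↔ ∀ h ∈ H, ∀ l ∈ L, PropQ N M0 L h l := by
  have hNrT : (N.restrict D).transitions = L ∪ H := by
    rw [PTNet.restrict_transitions, hT]
    ext t
    simp only [Finset.mem_sdiff, Finset.mem_union]
    constructor
    · rintro ⟨h1, h2⟩
      rcases h1 with (h' | h') | h'
      · exact Or.inl h'
      · exact absurd h' h2
      · exact Or.inr h'
    · rintro (h' | h')
      · exact ⟨Or.inl (Or.inl h'), Finset.disjoint_left.mp hLD h'⟩
      · exact ⟨Or.inr h', Finset.disjoint_right.mp hDH h'⟩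
  constructor
  · rintro ⟨hB0, hBd⟩ h hh l hl
    intro χ s M1 M2 M3 M4 hχ hs hχrun hfire hs3 hs4
    have hhD : h ∉ D := Finset.disjoint_right.mp hDH hh
    have hlD : l ∉ D := Finset.disjoint_right.mp hLD.symm hl
    have hsD : ∀ t ∈ s, t ∉ D := fun t ht => Finset.disjoint_right.mp hLD.symm (hs t ht)
    -- helper applying PropP of the restricted net at a base marking
    have apply_propP : ∀ (M : P → ℕ) (w : List Tr), (∀ t ∈ w, t ∉ D) →
        PropP (N.restrict D) M L H h l → N.FiresSeq M w M1 →
        (N.Enabled M3 l ↔ N.Enabled M4 l) := by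
      intro M w hwD hPP hwrun
      have hwLH : ∀ t ∈ w, t ∈ L ∪ H := by
        intro t ht
        have htr := N.firesSeq_mem_transitions hwrun t ht
        rw [hT] at htr
        rcases Finset.mem_union.mp htr with h' | h'
        · rcases Finset.mem_union.mp h' with h'' | h''
          · exact Finset.mem_union_left _ h''
          · exact absurd h'' (hwD t ht)
        · exact Finset.mem_union_right _ h'
      have hwNr := (N.restrict_firesSeq_iff hwD).mpr hwrun
      have hfireNr := (N.restrict_fires_iff hhD).mpr hfire
      have hs3Nr := (N.restrict_firesSeq_iff hsD).mpr hs3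
      have hs4Nr := (N.restrict_firesSeq_iff hsD).mpr hs4
      have hconc := hPP w s M1 M2 M3 M4 hwLH hs hwNr hfireNr hs3Nr hs4Nr
      rw [N.restrict_enabled_iff hlD M3, N.restrict_enabled_iff hlD M4] at hconc
      exact hconc
    by_cases hD : ∃ t ∈ χ, t ∈ D
    · obtain ⟨υ, d, w, heq, hd, hwD⟩ := exists_split_last_prop (· ∈ D) χ hD
      subst heq
      rcases (N.firesSeq_append).mp hχrun with ⟨Mu, hυ, hrest⟩
      rcases hrest with ⟨M', hdf, hwrun⟩
      have hMrun : N.FiresSeq M0 (υ ++ [d]) M' :=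
        (N.firesSeq_append).mpr ⟨Mu, hυ, ⟨M', hdf, rfl⟩⟩
      have hB := hBd υ d M' hd hMrun
      have hPP := (PTNet.bndc_iff_propP (N.restrict D) M' L H hNrT hLH).mp hB h hh l hl
      exact apply_propP M' w hwD hPP hwrun
    · push_neg at hD
      have hPP := (PTNet.bndc_iff_propP (N.restrict D) M0 L H hNrT hLH).mp hB0 h hh l hl
      exact apply_propP M0 χ hD hPP hχrun
  · intro hQ
    constructor
    · exact (PTNet.bndc_iff_propP (N.restrict D) M0 L H hNrT hLH).mpr
        (fun h hh l hl => PTNet.propQ_implies_propP N M0 L D H hLD hDH hh hl [] M0 rfl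
          (hQ h hh l hl))
    · intro υ d M hd hMrun
      exact (PTNet.bndc_iff_propP (N.restrict D) M L H hNrT hLH).mpr
        (fun h hh l hl => PTNet.propQ_implies_propP N M0 L D H hLD hDH hh hl (υ ++ [d]) M
          hMrun (hQ h hh l hl))
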